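/- If x, y ∈ [-C, C] for some C > 0, then |x - y| ≤ 4·exp(C)·|σ(x) - σ(y)|, where σ(t) = 1/(1+e^{-t}) is the sigmoid function. -/

import Mathlib

noncomputable def sigmoid (t : ℝ) : ℝ := 1 / (1 + Real.exp (-t))

lemma sigmoid_hasDerivAt (t : ℝ) :
    HasDerivAt sigmoid (Real.exp (-t) / (1 + Real.exp (-t))^2) t := by
  have h1 : HasDerivAt (fun s : ℝ => 1 + Real.exp (-s)) (-Real.exp (-t)) t := by
    have := (Real.hasDerivAt_exp (-t)).comp t (hasDerivAt_neg t)
    exact ((hasDerivAt_const t (1:ℝ)).add this).congr_deriv (by simp)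
  have hne : (1 + Real.exp (-t)) ≠ 0 := by positivity
  have := h1.inv hne
  have h2 : sigmoid = fun s : ℝ => (1 + Real.exp (-s))⁻¹ := by
    funext s; simp [sigmoid, one_div]
  rw [h2]
  refine this.congr_deriv ?_
  ring

lemma sigmoid_deriv_bound {C t : ℝ} (hC : 0 < C) (ht : t ∈ Set.Icc (-C) C) :
    1 / (4 * Real.exp C) ≤ Real.exp (-t) / (1 + Real.exp (-t))^2 := by
  obtain ⟨h1, h2⟩ := ht
  set u := Real.exp (-t) with hu
  have hu0 : 0 < u := Real.exp_pos _
  have hlo : Real.exp (-C) ≤ u := Real.exp_le_exp.2 (by linarith)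
  have hhi : u ≤ Real.exp C := Real.exp_le_exp.2 (by linarith)
  have hE1 : (1:ℝ) ≤ Real.exp C := Real.one_le_exp (le_of_lt hC)
  have hEprod : Real.exp (-C) * Real.exp C = 1 := by
    rw [← Real.exp_add]; simp
  have hE0 : 0 < Real.exp C := Real.exp_pos _
  rw [div_le_div_iff₀ (by positivity) (by positivity)]
  nlinarith [mul_nonneg (sub_nonneg.2 hlo) (sub_nonneg.2 hhi), Real.exp_pos (-C)]

lemma sigmoid_bound_lt (C x y : ℝ) (hC : 0 < C)
    (hx : x ∈ Set.Icc (-C) C) (hy : y ∈ Set.Icc (-C) C) (hxy : x < y) :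
    |x - y| ≤ 4 * Real.exp C * |sigmoid x - sigmoid y| := by
  have hcont : ContinuousOn sigmoid (Set.Icc x y) :=
    fun t _ => ((sigmoid_hasDerivAt t).differentiableAt.continuousAt).continuousWithinAt
  obtain ⟨c, hc, hceq⟩ := exists_hasDerivAt_eq_slope sigmoid
    (fun t => Real.exp (-t) / (1 + Real.exp (-t))^2) hxy hcont
    (fun t _ => sigmoid_hasDerivAt t)
  have hcC : c ∈ Set.Icc (-C) C := ⟨le_trans hx.1 hc.1.le, le_trans hc.2.le hy.2⟩
  have hder := sigmoid_deriv_bound hC hcC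
  have hE0 : 0 < Real.exp C := Real.exp_pos _
  have hyx : 0 < y - x := by linarith
  have key : sigmoid y - sigmoid x = (Real.exp (-c) / (1 + Real.exp (-c))^2) * (y - x) := by
    rw [hceq, div_mul_cancel₀ _ (ne_of_gt hyx)]
  have : |sigmoid x - sigmoid y| = (Real.exp (-c) / (1 + Real.exp (-c))^2) * (y - x) := by
    rw [abs_sub_comm, key, abs_of_nonneg]
    positivity
  rw [this, abs_of_nonpos (by linarith)]
  have h4 : 1 / (4 * Real.exp C) * (y - x) ≤
      (Real.exp (-c) / (1 + Real.exp (-c))^2) * (y - x) :=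
    mul_le_mul_of_nonneg_right hder hyx.le
  calc -(x - y) = (4 * Real.exp C) * (1 / (4 * Real.exp C) * (y - x)) := by
        field_simp
        ring
    _ ≤ 4 * Real.exp C * ((Real.exp (-c) / (1 + Real.exp (-c))^2) * (y - x)) :=
        mul_le_mul_of_nonneg_left h4 (by positivity)

theorem sigmoid_bound (C x y : ℝ) (hC : 0 < C)
    (hx : x ∈ Set.Icc (-C) C) (hy : y ∈ Set.Icc (-C) C) :
    |x - y| ≤ 4 * Real.exp C * |sigmoid x - sigmoid y| := by
  rcases lt_trichotomy x y with h | h | h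
  · exact sigmoid_bound_lt C x y hC hx hy h
  · simp [h]
  · rw [abs_sub_comm x y, abs_sub_comm (sigmoid x) (sigmoid y)]
    exact sigmoid_bound_lt C y x hC hy hx h
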